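/- Let (Ω, 𝔉, ℙ) be a probability space with a filtration (𝔉_k)_{k≥0}, let β ∈ (0,1), and let (T_k)_{k≥0} be events with T_k ∈ 𝔉_k and ℙ(T_k | 𝔉_{k−1}) ≥ β almost surely for all k ≥ 1 (and ℙ(T_0) ≥ β). Define W_j = Σ_{k=0}^{j} (1_{T_k} − β). Then ℙ(limsup_{j→∞} W_j = +∞) = 1. -/

import Mathlib

open Filter MeasureTheory

/-- Random-walk submartingale lemma: if each event `T k` has conditional
probability at least `β ∈ (0,1)` given the past, then the random walk
`W j = ∑_{k=0}^{j} (1_{T k} − β)` has `limsup W j = +∞` almost surely. -/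
theorem random_walk_limsup_top {Ω : Type*} {mΩ : MeasurableSpace Ω}
    (μ : Measure Ω) [IsProbabilityMeasure μ]
    (𝔉 : Filtration ℕ mΩ) (β : ℝ) (hβ : β ∈ Set.Ioo (0 : ℝ) 1)
    (T : ℕ → Set Ω) (hTmeas : ∀ k, MeasurableSet[𝔉 k] (T k))
    (hT0 : ENNReal.ofReal β ≤ μ (T 0))
    (hcond : ∀ k, 1 ≤ k →
      ∀ᵐ ω ∂μ, β ≤ (μ[(T k).indicator (fun _ => (1 : ℝ)) | 𝔉 (k - 1)]) ω) :
    μ {ω | Filter.atTop.limsup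
        (fun j => ((∑ k ∈ Finset.range (j + 1),
          ((T k).indicator (fun _ => (1 : ℝ)) ω - β) : ℝ) : EReal)) = ⊤} = 1 := by
  obtain ⟨hβ0, hβ1⟩ := hβ
  set g : ℕ → Ω → ℝ := fun k => (T k).indicator (fun _ => (1 : ℝ)) with hg
  set f : ℕ → Ω → ℝ := fun j ω => ∑ k ∈ Finset.range (j + 1), (g k ω - β) with hf
  -- basic facts about g
  have hg01 : ∀ k ω, g k ω = 0 ∨ g k ω = 1 := by
    intro k ω
    by_cases h : ω ∈ T k <;> simp [hg, Set.indicator_apply, h]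
  have hgsm : ∀ k, StronglyMeasurable[𝔉 k] (g k) :=
    fun k => (stronglyMeasurable_const.indicator (hTmeas k))
  have hgint : ∀ k, Integrable (g k) μ := by
    intro k
    exact (integrable_const (1 : ℝ)).indicator ((𝔉.le k) _ (hTmeas k))
  -- f is adapted and integrable
  have hadp : StronglyAdapted 𝔉 f := by
    intro j
    apply Finset.stronglyMeasurable_fun_sum
    intro k hk
    have hk' : k ≤ j := Nat.lt_succ_iff.mp (Finset.mem_range.mp hk)
    exact ((hgsm k).mono (𝔉.mono hk')).sub stronglyMeasurable_const
  have hint : ∀ j, Integrable (f j) μ := by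
    intro j
    apply integrable_finset_sum
    intro k _
    exact (hgint k).sub (integrable_const β)
  -- f is a submartingale
  have hsub : Submartingale f 𝔉 μ := by
    apply submartingale_of_condExp_sub_nonneg_nat hadp hint
    intro i
    have hdiff : (f (i + 1) - f i) = fun ω => g (i + 1) ω - β := by
      funext ω
      simp only [Pi.sub_apply, hf, Finset.sum_range_succ]
      ring
    have hci := hcond (i + 1) (Nat.le_add_left 1 i)
    simp only [Nat.add_sub_cancel] at hci
    have hce : μ[f (i + 1) - f i | 𝔉 i] =ᵐ[μ] fun ω => (μ[g (i + 1) | 𝔉 i]) ω - β := by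
      rw [hdiff]
      have heq : (fun ω => g (i + 1) ω - β) = g (i + 1) - fun _ => β := rfl
      rw [heq]
      filter_upwards [condExp_sub (hgint (i + 1)) (integrable_const β) (m := 𝔉 i)] with ω h1
      simp only [Pi.sub_apply] at h1 ⊢
      rw [h1, congrFun (condExp_const (𝔉.le i) β (μ := μ)) ω]
    filter_upwards [hce, hci] with ω h1 h2
    simp only [Pi.zero_apply, h1, sub_nonneg]
    exact h2
  -- bounded differences
  have hbdd : ∀ᵐ ω ∂μ, ∀ i, |f (i + 1) ω - f i ω| ≤ ((1 : NNReal) : ℝ) := by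
    refine Filter.Eventually.of_forall fun ω i => ?_
    have heq : f (i + 1) ω - f i ω = g (i + 1) ω - β := by
      simp only [hf, Finset.sum_range_succ]; ring
    rcases hg01 (i + 1) ω with h | h <;>
      rw [heq, h, NNReal.coe_one, abs_le] <;> constructor <;> linarith
  -- f never converges pointwise
  have hnoconv : ∀ ω, ¬ ∃ c, Tendsto (fun n => f n ω) atTop (nhds c) := by
    rintro ω ⟨c, hc⟩
    have hd : Tendsto (fun n => f (n + 1) ω - f n ω) atTop (nhds 0) := by
      have := (hc.comp (tendsto_add_atTop_nat 1)).sub hc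
      simpa using this
    set ε := min β (1 - β) with hε
    have hεpos : 0 < ε := lt_min hβ0 (by linarith)
    have hub : ∀ n, ε ≤ |f (n + 1) ω - f n ω| := by
      intro n
      have : f (n + 1) ω - f n ω = g (n + 1) ω - β := by
        simp only [hf, Finset.sum_range_succ]; ring
      rw [this]
      rcases hg01 (n + 1) ω with h | h <;> rw [h]
      · rw [abs_of_nonpos (by linarith)]
        simp only [neg_sub, zero_sub, neg_neg]
        exact min_le_left _ _
      · rw [abs_of_nonneg (by linarith)]
        exact min_le_right _ _
    have := hd.abs
    rw [abs_zero] at this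
    have h2 := (this.eventually (eventually_lt_nhds hεpos))
    obtain ⟨n, hn⟩ := h2.exists
    exact absurd (hub n) (not_le.mpr hn)
  -- a.e. not bounded above
  have hae : ∀ᵐ ω ∂μ, ¬ BddAbove (Set.range fun n => f n ω) := by
    filter_upwards [hsub.bddAbove_iff_exists_tendsto hbdd] with ω hω
    rw [hω]
    exact hnoconv ω
  -- unbounded above implies limsup = ⊤ in EReal
  have hlimsup : ∀ ω, ¬ BddAbove (Set.range fun n => f n ω) →
      Filter.atTop.limsup (fun j => ((f j ω : ℝ) : EReal)) = ⊤ := by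
    intro ω hω
    rw [eq_top_iff]
    refine le_of_forall_lt fun M hM => ?_
    obtain ⟨r, hrM, hr⟩ := EReal.exists_between_coe_real hM
    refine lt_of_lt_of_le hrM (le_limsup_of_frequently_le ?_)
    rw [frequently_atTop]
    intro N
    set B := (Finset.range (N + 1)).sup' (by simp) (fun j => f j ω) with hB
    obtain ⟨j, hj⟩ : ∃ j, max r B < f j ω := by
      by_contra h
      push_neg at h
      exact hω ⟨max r B, by rintro y ⟨n, rfl⟩; exact h n⟩
    have hjN : N ≤ j := by
      by_contra h
      push_neg at h
      have : f j ω ≤ B := Finset.le_sup' (fun j => f j ω) (Finset.mem_range.mpr (Nat.lt_succ_of_lt h))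
      have := le_trans this (le_max_right r B)
      linarith [lt_of_le_of_lt this hj]
    refine ⟨j, hjN, ?_⟩
    have : r ≤ f j ω := le_of_lt (lt_of_le_of_lt (le_max_left r B) hj)
    exact_mod_cast this
  -- conclude
  have hfinal : ∀ᵐ ω ∂μ, ω ∈ {ω | Filter.atTop.limsup
      (fun j => ((∑ k ∈ Finset.range (j + 1),
        ((T k).indicator (fun _ => (1 : ℝ)) ω - β) : ℝ) : EReal)) = ⊤} := by
    filter_upwards [hae] with ω hω
    exact hlimsup ω hω
  have : {ω | Filter.atTop.limsup
      (fun j => ((∑ k ∈ Finset.range (j + 1),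
        ((T k).indicator (fun _ => (1 : ℝ)) ω - β) : ℝ) : EReal)) = ⊤} =ᵐ[μ] (Set.univ : Set Ω) := by
    rw [Filter.eventuallyEq_univ]
    exact hfinal
  rw [measure_congr this, measure_univ]
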